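/- For 1 < p ≤ 2, the generating function ψ_p(y) = (y^p − p(y−1) − 1)/(p(p−1)) satisfies the admissibility condition (ψ_p''')² ≤ (1/2) ψ_p'' ψ_p'''' on ℝ⁺. -/

import Mathlib

/-- For 1 < p ≤ 2, ψ_p(y) = (y^p − p(y−1) − 1)/(p(p−1)) satisfies
(ψ_p''')² ≤ (1/2) ψ_p'' ψ_p'''' on ℝ⁺. -/
theorem stmt_1 (p : ℝ) (hp1 : 1 < p) (hp2 : p ≤ 2)
    (ψ : ℝ → ℝ) (hψ : ∀ y : ℝ, ψ y = (y ^ p - p * (y - 1) - 1) / (p * (p - 1))) :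
    ∀ y : ℝ, 0 < y →
      (deriv^[3] ψ y) ^ 2 ≤ (1 / 2) * (deriv^[2] ψ y) * (deriv^[4] ψ y) := by
  have hp0 : (0:ℝ) < p := by linarith
  have hp1' : (0:ℝ) < p - 1 := by linarith
  have hpp : p * (p - 1) ≠ 0 := by positivity
  -- helper: functions equal on positives have equal derivatives at positive points
  have key : ∀ (f g : ℝ → ℝ), (∀ x : ℝ, 0 < x → f x = g x) →
      ∀ x : ℝ, 0 < x → deriv f x = deriv g x := by
    intro f g h x hx
    apply Filter.EventuallyEq.deriv_eq
    filter_upwards [isOpen_Ioi.mem_nhds hx] with z hz using h z hz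
  set f1 : ℝ → ℝ := fun y => (p * y ^ (p - 1) - p) / (p * (p - 1)) with hf1
  set f2 : ℝ → ℝ := fun y => y ^ (p - 2) with hf2
  set f3 : ℝ → ℝ := fun y => (p - 2) * y ^ (p - 3) with hf3
  set f4 : ℝ → ℝ := fun y => (p - 2) * (p - 3) * y ^ (p - 4) with hf4
  have hd1 : ∀ x : ℝ, 0 < x → deriv ψ x = f1 x := by
    intro x hx
    have h0 : HasDerivAt (fun y : ℝ => y ^ p) (p * x ^ (p - 1)) x :=
      Real.hasDerivAt_rpow_const (Or.inl hx.ne')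
    have h1 : HasDerivAt (fun y : ℝ => (y ^ p - p * (y - 1) - 1) / (p * (p - 1)))
        (f1 x) x := by
      have := (((h0.sub (((hasDerivAt_id x).sub_const 1).const_mul p)).sub_const 1).div_const
        (p * (p - 1)))
      convert this using 1
      · rfl
      · rfl
      · rfl
      rw [hf1]; simp
    have h2 : HasDerivAt ψ (f1 x) x := by
      apply h1.congr_of_eventuallyEq
      filter_upwards with z using (hψ z)
    exact h2.deriv
  have hstep : ∀ x : ℝ, 0 < x → HasDerivAt f1 (f2 x) x := by
    intro x hx
    have h0 : HasDerivAt (fun y : ℝ => y ^ (p - 1)) ((p - 1) * x ^ (p - 1 - 1)) x :=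
      Real.hasDerivAt_rpow_const (Or.inl hx.ne')
    have h1 : HasDerivAt f1 (p * ((p - 1) * x ^ (p - 1 - 1)) / (p * (p - 1))) x :=
      ((h0.const_mul p).sub_const p).div_const _
    convert h1 using 1
    rw [hf2]
    rw [show p - 1 - 1 = p - 2 by ring]
    field_simp
  have hstep2 : ∀ x : ℝ, 0 < x → HasDerivAt f2 (f3 x) x := by
    intro x hx
    have h0 : HasDerivAt (fun y : ℝ => y ^ (p - 2)) ((p - 2) * x ^ (p - 2 - 1)) x :=
      Real.hasDerivAt_rpow_const (Or.inl hx.ne')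
    convert h0 using 1
    rw [hf3, show p - 2 - 1 = p - 3 by ring]
  have hstep3 : ∀ x : ℝ, 0 < x → HasDerivAt f3 (f4 x) x := by
    intro x hx
    have h0 : HasDerivAt (fun y : ℝ => y ^ (p - 3)) ((p - 3) * x ^ (p - 3 - 1)) x :=
      Real.hasDerivAt_rpow_const (Or.inl hx.ne')
    have h1 : HasDerivAt f3 ((p - 2) * ((p - 3) * x ^ (p - 3 - 1))) x := h0.const_mul _
    convert h1 using 1
    rw [hf4]
    ring_nf
  have hd2 : ∀ x : ℝ, 0 < x → deriv^[2] ψ x = f2 x := by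
    intro x hx
    have : deriv^[2] ψ x = deriv (deriv ψ) x := by
      simp [Function.iterate_succ, Function.comp]
    rw [this, key _ f1 hd1 x hx, (hstep x hx).deriv]
  have hd3 : ∀ x : ℝ, 0 < x → deriv^[3] ψ x = f3 x := by
    intro x hx
    have : deriv^[3] ψ x = deriv (deriv^[2] ψ) x := by
      rw [show (3 : ℕ) = 2 + 1 from rfl, Function.iterate_succ_apply']
    rw [this, key _ f2 hd2 x hx, (hstep2 x hx).deriv]
  have hd4 : ∀ x : ℝ, 0 < x → deriv^[4] ψ x = f4 x := by
    intro x hx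
    have : deriv^[4] ψ x = deriv (deriv^[3] ψ) x := by
      rw [show (4 : ℕ) = 3 + 1 from rfl, Function.iterate_succ_apply']
    rw [this, key _ f3 hd3 x hx, (hstep3 x hx).deriv]
  intro y hy
  rw [hd2 y hy, hd3 y hy, hd4 y hy, hf2, hf3, hf4]
  have e1 : (y ^ (p - 3)) ^ 2 = y ^ (2 * p - 6) := by
    rw [← Real.rpow_natCast (y ^ (p - 3)) 2, ← Real.rpow_mul hy.le]
    norm_num; ring_nf
  have e2 : y ^ (p - 2) * y ^ (p - 4) = y ^ (2 * p - 6) := by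
    rw [← Real.rpow_add hy]; ring_nf
  have hpos : 0 < y ^ (2 * p - 6) := Real.rpow_pos_of_pos hy _
  have h22 : p - 2 ≤ 0 := by linarith
  calc ((p - 2) * y ^ (p - 3)) ^ 2 = (p - 2) ^ 2 * y ^ (2 * p - 6) := by
        rw [mul_pow, e1]
    _ ≤ (1 / 2) * ((p - 2) * (p - 3)) * y ^ (2 * p - 6) := by
        apply mul_le_mul_of_nonneg_right _ hpos.le
        nlinarith
    _ = 1 / 2 * y ^ (p - 2) * ((p - 2) * (p - 3) * y ^ (p - 4)) := by
        rw [show 1 / 2 * y ^ (p-2) * ((p-2)*(p-3) * y ^ (p-4)) =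
          1/2 * ((p-2)*(p-3)) * (y ^ (p-2) * y ^ (p-4)) by ring, e2]
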